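/- arXiv:1709.08571 — 3 statements merged into one kernel-verified Lean document; each statement's English description precedes it below -/
import Mathlib

section
/- Let f : ℝ^d → ℝ be twice continuously differentiable with L2-Lipschitz Hessian, let ε > 0, and let x₀ satisfy f(x₀) − inf f ≤ Δ < ∞. Suppose x₁ = x₀ and (v_j) are unit vectors such that for every j: λ_min(∇²f(x_j)) ≥ v_jᵀ∇²f(x_j)v_j − ε/2, and whenever v_jᵀ∇²f(x_j)v_j ≤ −ε/2 the update x_{j+1} = x_j − (2·|v_jᵀ∇²f(x_j)v_j|/L2)·sign(v_jᵀ∇f(x_j))·v_j is performed. Then the first index j* with v_{j*}ᵀ∇²f(x_{j*})v_{j*} > −ε/2 satisfies j* ≤ 1 + 12·L2²·(f(x₁) − f(x_{j*}))/ε³ ≤ 1 + 12·L2²·Δ/ε³, and at termination λ_min(∇²f(x_{j*})) ≥ −ε. -/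
open scoped RealInnerProductSpace

noncomputable def sgn (t : ℝ) : ℝ := if 0 ≤ t then 1 else -1

section Aux

variable {E : Type*} [NormedAddCommGroup E] [InnerProductSpace ℝ E] [CompleteSpace E]

lemma NCD.grad_inner (f : E → ℝ) (y w : E) : ⟪gradient f y, w⟫ = fderiv ℝ f y w := by
  simp [gradient, InnerProductSpace.toDual_symm_apply]

lemma NCD.diff_grad {f : E → ℝ} (hf : ContDiff ℝ 2 f) : Differentiable ℝ (gradient f) := by
  have h1 : ContDiff ℝ 1 (fderiv ℝ f) := hf.fderiv_right (by norm_num)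
  exact (InnerProductSpace.toDual ℝ E).symm.toContinuousLinearEquiv.differentiable.comp
    (h1.differentiable (by norm_num))

lemma NCD.hess_inner {f : E → ℝ} (hf : ContDiff ℝ 2 f) (a w : E) :
    HasFDerivAt (fun y => ⟪gradient f y, w⟫)
      ((innerSL ℝ w).comp (fderiv ℝ (gradient f) a)) a := by
  have h1 : HasFDerivAt (fun y => (innerSL ℝ w) (gradient f y))
      ((innerSL ℝ w).comp (fderiv ℝ (gradient f) a)) a :=
    (innerSL ℝ w).hasFDerivAt.comp a ((NCD.diff_grad hf) a).hasFDerivAt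
  convert h1 using 2 with y
  exact real_inner_comm _ _

lemma NCD.taylor_ub (f : E → ℝ) (L2 : ℝ) (hL2 : 0 ≤ L2) (hf : ContDiff ℝ 2 f)
    (hHlip : ∀ a b : E, ‖fderiv ℝ (gradient f) a - fderiv ℝ (gradient f) b‖ ≤ L2 * ‖a - b‖)
    (x h : E) :
    f (x + h) ≤ f x + ⟪gradient f x, h⟫ + (1/2) * ⟪(fderiv ℝ (gradient f) x) h, h⟫
      + L2 / 6 * ‖h‖ ^ 3 := by
  set c : ℝ → E := fun t => x + t • h with hc_def
  have hc0 : c 0 = x := by simp [hc_def]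
  have hc1 : c 1 = x + h := by simp [hc_def]
  have hc : ∀ t : ℝ, HasDerivAt c h t := by
    intro t
    have := ((hasDerivAt_id t).smul_const h).const_add x
    simpa [hc_def] using this
  set χ : ℝ → ℝ := fun t => ⟪(fderiv ℝ (gradient f) (c t)) h, h⟫ with hχ_def
  have hφ : ∀ t : ℝ, HasDerivAt (fun t => f (c t)) (⟪gradient f (c t), h⟫) t := by
    intro t
    have := ((hf.differentiable (by norm_num) (c t)).hasFDerivAt).comp_hasDerivAt t (hc t)
    rw [NCD.grad_inner]
    exact this
  have hψ : ∀ t : ℝ, HasDerivAt (fun t => ⟪gradient f (c t), h⟫) (χ t) t := by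
    intro t
    have := (NCD.hess_inner hf (c t) h).comp_hasDerivAt t (hc t)
    have h2 : χ t = (innerSL ℝ h).comp (fderiv ℝ (gradient f) (c t)) h := by
      simp [hχ_def, real_inner_comm]
    rw [h2]
    exact this
  have hχb : ∀ t : ℝ, 0 ≤ t → χ t - χ 0 ≤ L2 * ‖h‖ ^ 3 * t := by
    intro t ht
    have e1 : χ t - χ 0
        = ⟪(fderiv ℝ (gradient f) (c t) - fderiv ℝ (gradient f) (c 0)) h, h⟫ := by
      simp [hχ_def, ContinuousLinearMap.sub_apply, inner_sub_left]
    have e2 : |⟪(fderiv ℝ (gradient f) (c t) - fderiv ℝ (gradient f) (c 0)) h, h⟫|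
        ≤ ‖fderiv ℝ (gradient f) (c t) - fderiv ℝ (gradient f) (c 0)‖ * ‖h‖ * ‖h‖ := by
      calc _ ≤ ‖(fderiv ℝ (gradient f) (c t) - fderiv ℝ (gradient f) (c 0)) h‖ * ‖h‖ :=
            abs_real_inner_le_norm _ _
        _ ≤ _ := by
            gcongr
            exact (fderiv ℝ (gradient f) (c t) - fderiv ℝ (gradient f) (c 0)).le_opNorm h
    have e3 : ‖fderiv ℝ (gradient f) (c t) - fderiv ℝ (gradient f) (c 0)‖ ≤ L2 * (t * ‖h‖) := by
      have := hHlip (c t) (c 0)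
      have e4 : c t - c 0 = t • h := by simp [hc_def]
      rw [e4, norm_smul] at this
      simpa [abs_of_nonneg ht] using this
    rw [e1]
    calc _ ≤ |⟪(fderiv ℝ (gradient f) (c t) - fderiv ℝ (gradient f) (c 0)) h, h⟫| := le_abs_self _
      _ ≤ (L2 * (t * ‖h‖)) * ‖h‖ * ‖h‖ := by
          refine e2.trans ?_
          gcongr
      _ = L2 * ‖h‖ ^ 3 * t := by ring
  set G : ℝ → ℝ := fun t => ⟪gradient f (c t), h⟫ - ⟪gradient f (c 0), h⟫ - t * χ 0
      - L2 * ‖h‖ ^ 3 / 2 * t ^ 2 with hG_def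
  have hG : ∀ t : ℝ, HasDerivAt G (χ t - χ 0 - L2 * ‖h‖ ^ 3 * t) t := by
    intro t
    have h1 : HasDerivAt (fun t : ℝ => t * χ 0) (χ 0) t := by
      simpa using (hasDerivAt_id t).mul_const (χ 0)
    have h2 : HasDerivAt (fun t : ℝ => L2 * ‖h‖ ^ 3 / 2 * t ^ 2) (L2 * ‖h‖ ^ 3 * t) t := by
      have := (hasDerivAt_pow 2 t).const_mul (L2 * ‖h‖ ^ 3 / 2)
      convert this using 1
      · rfl
      · rfl
      ring
    exact (((hψ t).sub_const _).sub h1).sub h2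
  have hGanti : AntitoneOn G (Set.Icc 0 1) := by
    apply antitoneOn_of_deriv_nonpos (convex_Icc 0 1)
    · exact fun t _ => ((hG t).continuousAt).continuousWithinAt
    · intro t ht
      exact ((hG t).differentiableAt).differentiableWithinAt
    · intro t ht
      rw [interior_Icc] at ht
      rw [(hG t).deriv]
      have := hχb t ht.1.le
      linarith
  have hGb : ∀ t ∈ Set.Icc (0:ℝ) 1, G t ≤ 0 := by
    intro t ht
    have : G t ≤ G 0 := hGanti (by simp) ht ht.1
    simpa [hG_def] using this
  set F : ℝ → ℝ := fun t => f (c t) - f (c 0) - t * ⟪gradient f (c 0), h⟫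
      - t ^ 2 / 2 * χ 0 - L2 * ‖h‖ ^ 3 / 6 * t ^ 3 with hF_def
  have hF : ∀ t : ℝ, HasDerivAt F (⟪gradient f (c t), h⟫ - ⟪gradient f (c 0), h⟫
      - t * χ 0 - L2 * ‖h‖ ^ 3 / 2 * t ^ 2) t := by
    intro t
    have h1 : HasDerivAt (fun t : ℝ => t * ⟪gradient f (c 0), h⟫) (⟪gradient f (c 0), h⟫) t := by
      simpa using (hasDerivAt_id t).mul_const _
    have h2 : HasDerivAt (fun t : ℝ => t ^ 2 / 2 * χ 0) (t * χ 0) t := by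
      have := (hasDerivAt_pow 2 t).mul_const (χ 0)
      convert this.div_const 2 using 1
      · rfl
      · rfl
      · funext s; ring
      · ring
    have h3 : HasDerivAt (fun t : ℝ => L2 * ‖h‖ ^ 3 / 6 * t ^ 3) (L2 * ‖h‖ ^ 3 / 2 * t ^ 2) t := by
      have := (hasDerivAt_pow 3 t).const_mul (L2 * ‖h‖ ^ 3 / 6)
      convert this using 1
      · rfl
      · rfl
      ring
    exact ((((hφ t).sub_const _).sub h1).sub h2).sub h3
  have hFanti : AntitoneOn F (Set.Icc 0 1) := by
    apply antitoneOn_of_deriv_nonpos (convex_Icc 0 1)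
    · exact fun t _ => ((hF t).continuousAt).continuousWithinAt
    · intro t ht
      exact ((hF t).differentiableAt).differentiableWithinAt
    · intro t ht
      rw [interior_Icc] at ht
      rw [(hF t).deriv]
      have := hGb t ⟨ht.1.le, ht.2.le⟩
      simp only [hG_def] at this
      linarith
  have hF1 : F 1 ≤ F 0 := hFanti (by simp) (by simp) zero_le_one
  have hF0 : F 0 = 0 := by simp [hF_def]
  rw [hF0] at hF1
  simp only [hF_def, hc1, hc0, one_pow, one_mul, hχ_def] at hF1 ⊢
  linarith

lemma NCD.sgn_sq (t : ℝ) : sgn t * sgn t = 1 := by unfold sgn; split <;> norm_num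

lemma NCD.sgn_mul_self (t : ℝ) : sgn t * t = |t| := by
  unfold sgn; split
  · rw [abs_of_nonneg (by assumption)]; ring
  · rw [abs_of_neg (by linarith)]; ring

lemma NCD.abs_sgn (t : ℝ) : |sgn t| = 1 := by unfold sgn; split <;> norm_num

lemma NCD.step_decrease (f : E → ℝ) (L2 ε : ℝ) (hL2 : 0 < L2) (hε : 0 < ε)
    (hf : ContDiff ℝ 2 f)
    (hHlip : ∀ a b : E, ‖fderiv ℝ (gradient f) a - fderiv ℝ (gradient f) b‖ ≤ L2 * ‖a - b‖)
    (p w : E) (hw : ‖w‖ = 1)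
    (hα : ⟪(fderiv ℝ (gradient f) p) w, w⟫ ≤ -ε/2) :
    f (p - ((2 * |⟪(fderiv ℝ (gradient f) p) w, w⟫| / L2) * sgn ⟪gradient f p, w⟫) • w)
      ≤ f p - ε^3/(12*L2^2) := by
  set α := ⟪(fderiv ℝ (gradient f) p) w, w⟫ with hα_def
  set c := ⟪gradient f p, w⟫ with hc_def
  set β := |α| with hβ_def
  have hβ : ε/2 ≤ β := by
    rw [hβ_def, abs_of_nonpos (by linarith)]; linarith
  set η := 2 * β / L2 with hη_def
  have hβpos : 0 < β := lt_of_lt_of_le (by linarith) hβ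
  have hηpos : 0 < η := by rw [hη_def]; exact div_pos (by linarith) hL2
  set h : E := -((η * sgn c) • w) with hh_def
  have hsub : p - ((2 * |α| / L2) * sgn c) • w = p + h := by
    rw [hh_def, hη_def]; abel
  rw [hsub]
  have key := NCD.taylor_ub f L2 hL2.le hf hHlip p h
  have hnorm : ‖h‖ = η := by
    rw [hh_def, norm_neg, norm_smul, hw]
    simp [Real.norm_eq_abs, abs_mul, NCD.abs_sgn, abs_of_pos hηpos]
  have hgrad : ⟪gradient f p, h⟫ ≤ 0 := by
    rw [hh_def, inner_neg_right, real_inner_smul_right, ← hc_def]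
    have : sgn c * c = |c| := NCD.sgn_mul_self c
    nlinarith [abs_nonneg c, hηpos.le]
  have hquad : ⟪(fderiv ℝ (gradient f) p) h, h⟫ = η^2 * α := by
    rw [hh_def]
    rw [map_neg, inner_neg_neg, map_smul, real_inner_smul_left, real_inner_smul_right, ← hα_def]
    linear_combination η ^ 2 * α * NCD.sgn_sq c
  rw [hnorm, hquad] at key
  have hαβ : α = -β := by rw [hβ_def, abs_of_nonpos (by linarith)]; ring
  have hcube : (ε/2)^3 ≤ β^3 := by
    apply pow_le_pow_left₀ (by linarith) hβ
  have harith : (1/2) * (η^2 * α) + L2/6 * η^3 ≤ -(ε^3/(12*L2^2)) := by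
    rw [hαβ, hη_def]
    have hL2' : L2 ≠ 0 := ne_of_gt hL2
    field_simp
    nlinarith [hcube, pow_pos hL2 5, mul_le_mul_of_nonneg_right hcube (pow_pos hL2 5).le]
  linarith

end Aux

/-- the negative curvature descent (NCD) algorithm terminates within
`1 + 12·L2²·Δ/ε³` iterations at a point whose Hessian has smallest eigenvalue `≥ -ε`. -/
theorem negative_curvature_descent_guarantee {d : ℕ}
    (f : EuclideanSpace ℝ (Fin d) → ℝ) (L2 Δ ε : ℝ)
    (hL2 : 0 < L2) (hε : 0 < ε)
    (hf : ContDiff ℝ 2 f)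
    (hHlip : ∀ a b : EuclideanSpace ℝ (Fin d),
      ‖fderiv ℝ (gradient f) a - fderiv ℝ (gradient f) b‖ ≤ L2 * ‖a - b‖)
    (x₀ : EuclideanSpace ℝ (Fin d))
    (hΔ : ∀ z : EuclideanSpace ℝ (Fin d), f x₀ - f z ≤ Δ)
    (x v : ℕ → EuclideanSpace ℝ (Fin d))
    (hx1 : x 1 = x₀)
    (hv : ∀ j : ℕ, 1 ≤ j → ‖v j‖ = 1)
    (hmin : ∀ j : ℕ, 1 ≤ j → ∀ u : EuclideanSpace ℝ (Fin d), ‖u‖ = 1 →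
      ⟪(fderiv ℝ (gradient f) (x j)) u, u⟫ ≥
        ⟪(fderiv ℝ (gradient f) (x j)) (v j), v j⟫ - ε / 2)
    (hupd : ∀ j : ℕ, 1 ≤ j →
      ⟪(fderiv ℝ (gradient f) (x j)) (v j), v j⟫ ≤ -ε / 2 →
      x (j + 1) = x j -
        ((2 * |⟪(fderiv ℝ (gradient f) (x j)) (v j), v j⟫| / L2) *
          sgn ⟪gradient f (x j), v j⟫) • v j) :
    ∃ jstar : ℕ, 1 ≤ jstar ∧
      ⟪(fderiv ℝ (gradient f) (x jstar)) (v jstar), v jstar⟫ > -ε / 2 ∧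
      (∀ i : ℕ, 1 ≤ i → i < jstar →
        ¬(⟪(fderiv ℝ (gradient f) (x i)) (v i), v i⟫ > -ε / 2)) ∧
      (jstar : ℝ) ≤ 1 + 12 * L2 ^ 2 * (f (x 1) - f (x jstar)) / ε ^ 3 ∧
      (jstar : ℝ) ≤ 1 + 12 * L2 ^ 2 * Δ / ε ^ 3 ∧
      ∀ u : EuclideanSpace ℝ (Fin d), ‖u‖ = 1 →
        ⟪(fderiv ℝ (gradient f) (x jstar)) u, u⟫ ≥ -ε := by
  classical
  set α : ℕ → ℝ := fun j => ⟪(fderiv ℝ (gradient f) (x j)) (v j), v j⟫ with hα_def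
  set δ := ε^3/(12*L2^2) with hδ_def
  have hδpos : 0 < δ := by rw [hδ_def]; positivity
  have step : ∀ j, 1 ≤ j → α j ≤ -ε/2 → f (x (j+1)) ≤ f (x j) - δ := by
    intro j hj hαj
    rw [hupd j hj (by exact_mod_cast hαj)]
    exact NCD.step_decrease f L2 ε hL2 hε hf hHlip (x j) (v j) (hv j hj) hαj
  have chain : ∀ n : ℕ, (∀ i, 1 ≤ i → i ≤ n → α i ≤ -ε/2) →
      f (x (n+1)) ≤ f (x 1) - n * δ := by
    intro n
    induction n with
    | zero => intro _; simp
    | succ n ih =>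
      intro hall
      have h1 := ih (fun i hi1 hi2 => hall i hi1 (hi2.trans (Nat.le_succ n)))
      have h2 := step (n+1) (by omega) (hall (n+1) (by omega) le_rfl)
      push_cast
      linarith
  have hexists : ∃ j, 1 ≤ j ∧ α j > -ε/2 := by
    by_contra hcon
    push_neg at hcon
    obtain ⟨n, hn⟩ := exists_nat_gt (Δ / δ)
    have hch := chain n (fun i hi1 _ => hcon i hi1)
    have hΔ' : f (x 1) - f (x (n+1)) ≤ Δ := by rw [hx1]; exact hΔ _
    have h1 : (n:ℝ) * δ ≤ Δ := by linarith
    rw [div_lt_iff₀ hδpos] at hn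
    linarith
  set jstar := Nat.find hexists with hjs_def
  obtain ⟨hjs1, hjs2⟩ := Nat.find_spec hexists
  have hmin' : ∀ i : ℕ, 1 ≤ i → i < jstar → ¬(α i > -ε/2) := by
    intro i hi1 hi2 hgt
    exact Nat.find_min hexists hi2 ⟨hi1, hgt⟩
  have hchain : f (x jstar) ≤ f (x 1) - ((jstar : ℝ) - 1) * δ := by
    have hall : ∀ i, 1 ≤ i → i ≤ jstar - 1 → α i ≤ -ε/2 := by
      intro i hi1 hi2
      have := hmin' i hi1 (by omega)
      linarith [not_lt.mp this]
    have := chain (jstar - 1) hall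
    have heq : jstar - 1 + 1 = jstar := by omega
    rw [heq] at this
    have hcast : ((jstar - 1 : ℕ) : ℝ) = (jstar : ℝ) - 1 := by
      have : (1:ℕ) ≤ jstar := hjs1
      push_cast [Nat.cast_sub this]
      ring
    rw [hcast] at this
    exact this
  have hbound1 : (jstar : ℝ) ≤ 1 + 12 * L2 ^ 2 * (f (x 1) - f (x jstar)) / ε ^ 3 := by
    have h1 : ((jstar : ℝ) - 1) * δ ≤ f (x 1) - f (x jstar) := by linarith
    have h2 : (jstar : ℝ) - 1 ≤ (f (x 1) - f (x jstar)) / δ :=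
      (le_div_iff₀ hδpos).mpr h1
    have h3 : (f (x 1) - f (x jstar)) / δ = 12 * L2 ^ 2 * (f (x 1) - f (x jstar)) / ε ^ 3 := by
      rw [hδ_def]
      field_simp
    linarith [h3 ▸ h2]
  have hDleΔ : f (x 1) - f (x jstar) ≤ Δ := by rw [hx1]; exact hΔ _
  have hbound2 : (jstar : ℝ) ≤ 1 + 12 * L2 ^ 2 * Δ / ε ^ 3 := by
    refine hbound1.trans ?_
    gcongr
  refine ⟨jstar, hjs1, hjs2, hmin', hbound1, hbound2, ?_⟩
  intro u hu
  have h1 := hmin jstar hjs1 u hu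
  have h2 : α jstar > -ε/2 := hjs2
  have h3 : α jstar = ⟪(fderiv ℝ (gradient f) (x jstar)) (v jstar), v jstar⟫ := rfl
  rw [← h3] at h1
  linarith
end

section
/- Let f : ℝ^d → ℝ be twice continuously differentiable with L2-Lipschitz Hessian. Let x ∈ ℝ^d and let v be a unit vector with v ᵀ∇²f(x)v ≤ 0. Set η = (2·|vᵀ∇²f(x)v|/L2)·sign(vᵀ∇f(x)) and x⁺ = x − η·v. Then the negative-curvature step satisfies f(x) − f(x⁺) ≥ 2·|vᵀ∇²f(x)v|³/(3·L2²). -/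
open scoped RealInnerProductSpace

lemma taylor2_upper {d : ℕ} (f : EuclideanSpace ℝ (Fin d) → ℝ) (L2 : ℝ)
    (hf : ContDiff ℝ 2 f)
    (hHlip : ∀ a b : EuclideanSpace ℝ (Fin d),
      ‖fderiv ℝ (gradient f) a - fderiv ℝ (gradient f) b‖ ≤ L2 * ‖a - b‖)
    (x u : EuclideanSpace ℝ (Fin d)) :
    f (x + u) ≤ f x + ⟪gradient f x, u⟫ + (1/2) * ⟪fderiv ℝ (gradient f) x u, u⟫
      + L2/6 * ‖u‖^3 := by
  have hg1 : ContDiff ℝ 1 (gradient f) := by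
    have h1 : ContDiff ℝ 1 (fderiv ℝ f) := hf.fderiv_right (by norm_num)
    exact (InnerProductSpace.toDual ℝ _).symm.contDiff.comp h1
  have hfd : Differentiable ℝ f := hf.differentiable two_ne_zero
  have hgd : Differentiable ℝ (gradient f) := hg1.differentiable one_ne_zero
  set H : EuclideanSpace ℝ (Fin d) → _ := fderiv ℝ (gradient f) with hH
  have hHcont : Continuous H := hg1.continuous_fderiv one_ne_zero
  set γ : ℝ → EuclideanSpace ℝ (Fin d) := fun t => x + t • u with hγdef
  have hγ : ∀ t : ℝ, HasDerivAt γ u t := by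
    intro t
    have := ((hasDerivAt_id t).smul_const u).const_add x
    simpa [hγdef] using this
  have hγc : Continuous γ := continuous_const.add (continuous_id.smul continuous_const)
  set φ : ℝ → ℝ := fun t => f (γ t) with hφdef
  set φ₁ : ℝ → ℝ := fun t => ⟪gradient f (γ t), u⟫ with hφ₁def
  set φ₂ : ℝ → ℝ := fun t => ⟪H (γ t) u, u⟫ with hφ₂def
  have hφ' : ∀ t : ℝ, HasDerivAt φ (φ₁ t) t := by
    intro t
    have h1 : HasDerivAt φ (fderiv ℝ f (γ t) u) t :=
      (hfd (γ t)).hasFDerivAt.comp_hasDerivAt t (hγ t)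
    have : φ₁ t = fderiv ℝ f (γ t) u := InnerProductSpace.toDual_symm_apply
    rw [this]; exact h1
  have hφ₁' : ∀ t : ℝ, HasDerivAt φ₁ (φ₂ t) t := by
    intro t
    have h1 : HasDerivAt (fun s => gradient f (γ s)) (H (γ t) u) t :=
      (hgd (γ t)).hasFDerivAt.comp_hasDerivAt t (hγ t)
    have h2 := (h1.inner ℝ (hasDerivAt_const t u))
    simpa only [inner_zero_right, inner_zero_left, add_zero, zero_add] using h2
  have hφ₁c : Continuous φ₁ :=
    Continuous.inner ((hg1.continuous).comp hγc) continuous_const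
  have hφ₂c : Continuous φ₂ :=
    Continuous.inner ((hHcont.comp hγc).clm_apply continuous_const) continuous_const
  have hbound : ∀ t : ℝ, t ∈ Set.Icc (0:ℝ) 1 → φ₂ t ≤ φ₂ 0 + L2 * ‖u‖^3 * t := by
    intro t ht
    have h0 : γ 0 = x := by simp [hγdef]
    have h1 : φ₂ t - φ₂ 0 = ⟪(H (γ t) - H (γ 0)) u, u⟫ := by
      simp [hφ₂def, ContinuousLinearMap.sub_apply, inner_sub_left]
    have h2 : ⟪(H (γ t) - H (γ 0)) u, u⟫ ≤ ‖(H (γ t) - H (γ 0)) u‖ * ‖u‖ :=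
      real_inner_le_norm _ _
    have h3 : ‖(H (γ t) - H (γ 0)) u‖ ≤ ‖H (γ t) - H (γ 0)‖ * ‖u‖ :=
      ContinuousLinearMap.le_opNorm _ _
    have h4 : ‖H (γ t) - H (γ 0)‖ ≤ L2 * ‖γ t - γ 0‖ := hHlip _ _
    have h5 : γ t - γ 0 = t • u := by simp [hγdef]
    have h6 : ‖γ t - γ 0‖ = t * ‖u‖ := by
      rw [h5, norm_smul, Real.norm_eq_abs, abs_of_nonneg ht.1]
    have h7 : ‖(H (γ t) - H (γ 0)) u‖ * ‖u‖ ≤ (‖H (γ t) - H (γ 0)‖ * ‖u‖) * ‖u‖ :=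
      mul_le_mul_of_nonneg_right h3 (norm_nonneg u)
    have h8 : (‖H (γ t) - H (γ 0)‖ * ‖u‖) * ‖u‖ ≤ ((L2 * (t * ‖u‖)) * ‖u‖) * ‖u‖ := by
      have := mul_le_mul_of_nonneg_right (mul_le_mul_of_nonneg_right (h6 ▸ h4) (norm_nonneg u))
        (norm_nonneg u)
      linarith
    have h9 : ((L2 * (t * ‖u‖)) * ‖u‖) * ‖u‖ = L2 * ‖u‖^3 * t := by ring
    linarith
  -- step 1: bound φ₁ on [0,1]
  have key1 : ∀ t : ℝ, t ∈ Set.Icc (0:ℝ) 1 → φ₁ t ≤ φ₁ 0 + φ₂ 0 * t + L2 * ‖u‖^3 * t^2 / 2 := by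
    intro t ht
    have hint : φ₁ t - φ₁ 0 = ∫ s in (0:ℝ)..t, φ₂ s :=
      (intervalIntegral.integral_eq_sub_of_hasDerivAt (fun s _ => hφ₁' s)
        (hφ₂c.intervalIntegrable 0 t)).symm
    have i1 : IntervalIntegrable (fun s : ℝ => φ₂ 0 + L2 * ‖u‖^3 * s) MeasureTheory.volume 0 t :=
      ((continuous_const.add (continuous_const.mul continuous_id')) :
        Continuous fun s : ℝ => φ₂ 0 + L2 * ‖u‖^3 * s).intervalIntegrable 0 t
    have hmono : (∫ s in (0:ℝ)..t, φ₂ s) ≤ ∫ s in (0:ℝ)..t, (φ₂ 0 + L2 * ‖u‖^3 * s) := by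
      apply intervalIntegral.integral_mono_on ht.1 (hφ₂c.intervalIntegrable 0 t) i1
      intro s hs
      exact hbound s ⟨hs.1, le_trans hs.2 ht.2⟩
    have hcalc : (∫ s in (0:ℝ)..t, (φ₂ 0 + L2 * ‖u‖^3 * s)) = φ₂ 0 * t + L2 * ‖u‖^3 * t^2 / 2 := by
      rw [intervalIntegral.integral_add (intervalIntegrable_const)
        ((show Continuous fun s : ℝ => L2 * ‖u‖^3 * s from (continuous_const.mul continuous_id')
          ).intervalIntegrable 0 t),
        intervalIntegral.integral_const_mul, integral_id]
      simp
      ring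
    linarith [hcalc ▸ hmono]
  -- step 2: bound φ 1
  have hint2 : φ 1 - φ 0 = ∫ s in (0:ℝ)..1, φ₁ s :=
    (intervalIntegral.integral_eq_sub_of_hasDerivAt (fun s _ => hφ' s)
      (hφ₁c.intervalIntegrable 0 1)).symm
  have c2 : Continuous (fun s : ℝ => φ₁ 0 + φ₂ 0 * s + L2 * ‖u‖^3 * s^2 / 2) :=
    (continuous_const.add (continuous_const.mul continuous_id')).add
      ((continuous_const.mul (continuous_pow 2)).div_const 2)
  have hmono2 : (∫ s in (0:ℝ)..1, φ₁ s)
      ≤ ∫ s in (0:ℝ)..1, (φ₁ 0 + φ₂ 0 * s + L2 * ‖u‖^3 * s^2 / 2) := by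
    apply intervalIntegral.integral_mono_on zero_le_one (hφ₁c.intervalIntegrable 0 1)
      (c2.intervalIntegrable 0 1)
    exact key1
  have hcalc2 : (∫ s in (0:ℝ)..1, (φ₁ 0 + φ₂ 0 * s + L2 * ‖u‖^3 * s^2 / 2))
      = φ₁ 0 + φ₂ 0 / 2 + L2 * ‖u‖^3 / 6 := by
    rw [intervalIntegral.integral_add
        ((show Continuous fun s : ℝ => φ₁ 0 + φ₂ 0 * s from (continuous_const.add
          (continuous_const.mul continuous_id'))).intervalIntegrable 0 1)
        ((show Continuous fun s : ℝ => L2 * ‖u‖^3 * s^2 / 2 from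
          ((continuous_const.mul (continuous_pow 2)).div_const 2)).intervalIntegrable 0 1),
      intervalIntegral.integral_add (intervalIntegrable_const)
        ((show Continuous fun s : ℝ => φ₂ 0 * s from (continuous_const.mul continuous_id')
          ).intervalIntegrable 0 1),
      intervalIntegral.integral_const_mul, integral_id]
    have e4 : (∫ s in (0:ℝ)..1, L2 * ‖u‖^3 * s^2 / 2) = L2 * ‖u‖^3 / 6 := by
      have h : (fun s : ℝ => L2 * ‖u‖^3 * s^2 / 2) = fun s : ℝ => (L2 * ‖u‖^3 / 2) * s^2 := by
        funext s; ring
      rw [h, intervalIntegral.integral_const_mul, integral_pow]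
      norm_num
      ring
    rw [e4]
    simp
    ring
  have hφ0 : φ 0 = f x := by simp [hφdef, hγdef]
  have hφ1 : φ 1 = f (x + u) := by simp [hφdef, hγdef]
  have hφ₁0 : φ₁ 0 = ⟪gradient f x, u⟫ := by simp [hφ₁def, hγdef]
  have hφ₂0 : φ₂ 0 = ⟪H x u, u⟫ := by simp [hφ₂def, hγdef]
  rw [← hφ0, ← hφ1, ← hφ₁0, ← hφ₂0]
  linarith [hcalc2 ▸ hmono2]

/-- objective decrease of a single negative-curvature step. -/
theorem negative_curvature_step_decrease {d : ℕ}
    (f : EuclideanSpace ℝ (Fin d) → ℝ) (L2 : ℝ) (hL2 : 0 < L2)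
    (hf : ContDiff ℝ 2 f)
    (hHlip : ∀ a b : EuclideanSpace ℝ (Fin d),
      ‖fderiv ℝ (gradient f) a - fderiv ℝ (gradient f) b‖ ≤ L2 * ‖a - b‖)
    (x v : EuclideanSpace ℝ (Fin d)) (hv : ‖v‖ = 1)
    (hneg : ⟪(fderiv ℝ (gradient f) x) v, v⟫ ≤ 0)
    (η : ℝ)
    (hη : η = (2 * |⟪(fderiv ℝ (gradient f) x) v, v⟫| / L2) * sgn ⟪gradient f x, v⟫)
    (xp : EuclideanSpace ℝ (Fin d)) (hxp : xp = x - η • v) :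
    f x - f xp ≥ 2 * |⟪(fderiv ℝ (gradient f) x) v, v⟫| ^ 3 / (3 * L2 ^ 2) := by
  set q : ℝ := ⟪(fderiv ℝ (gradient f) x) v, v⟫ with hqdef
  set lam : ℝ := |q| with hlamdef
  set g : ℝ := ⟪gradient f x, v⟫ with hgdef
  set A : ℝ := 2 * lam / L2 with hAdef
  have hlam0 : 0 ≤ lam := abs_nonneg q
  have hqlam : q = -lam := by
    rw [hlamdef, abs_of_nonpos hneg]; ring
  have hA0 : 0 ≤ A := by positivity
  have hsgn : |sgn g| = 1 := by
    unfold sgn; split <;> simp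
  have hsgng : sgn g * g = |g| := by
    unfold sgn; split
    · rw [abs_of_nonneg (by assumption)]; ring
    · rw [abs_of_neg (by linarith [lt_of_not_ge (by assumption)])]; ring
  have habs : |η| = A := by
    rw [hη, abs_mul, hsgn, mul_one, abs_of_nonneg hA0]
  have hηg : 0 ≤ η * g := by
    rw [hη]
    have : 2 * lam / L2 * sgn g * g = A * (sgn g * g) := by rw [hAdef]; ring
    rw [this, hsgng]
    positivity
  have hxpu : xp = x + (-η) • v := by
    rw [hxp, sub_eq_add_neg, ← neg_smul]
  have ht := taylor2_upper f L2 hf hHlip x ((-η) • v)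
  rw [← hxpu] at ht
  have e1 : ⟪gradient f x, (-η) • v⟫ = -(η * g) := by
    rw [real_inner_smul_right, hgdef]; ring
  have e2 : ⟪(fderiv ℝ (gradient f) x) ((-η) • v), (-η) • v⟫ = η^2 * q := by
    rw [map_smul, real_inner_smul_left, real_inner_smul_right, ← hqdef]
    ring
  have e3 : ‖(-η) • v‖ = A := by
    rw [norm_smul, hv, mul_one, Real.norm_eq_abs, abs_neg, habs]
  have e4 : η^2 = A^2 := by rw [← sq_abs, habs]
  rw [e1, e2, e3, e4, hqlam] at ht
  have key : (1/2 : ℝ) * (A^2 * -lam) + L2/6 * A^3 = -(2 * lam^3 / (3 * L2^2)) := by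
    rw [hAdef]
    field_simp
    ring
  rw [hlamdef] at key ⊢
  linarith [ht, key]
end

section
/- Let f : ℝ^d → ℝ be differentiable with L1-Lipschitz gradient (L1 > 0). Let ε₁ > 0 and let g ∈ ℝ^d satisfy ‖g − ∇f(x)‖ ≤ ε₄ with 0 ≤ ε₄ ≤ ε₁/(2√2). Set x⁺ = x − (1/L1)·g. Then f(x) − f(x⁺) ≥ ‖g‖²/(4·L1) − ε₁²/(8·L1). -/
open scoped RealInnerProductSpace

lemma descent_lemma {d : ℕ}
    (f : EuclideanSpace ℝ (Fin d) → ℝ) (L1 : ℝ) (hL1 : 0 < L1)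
    (hdiff : Differentiable ℝ f)
    (hglip : ∀ a b : EuclideanSpace ℝ (Fin d),
      ‖gradient f a - gradient f b‖ ≤ L1 * ‖a - b‖)
    (x y : EuclideanSpace ℝ (Fin d)) :
    f y ≤ f x + ⟪gradient f x, y - x⟫ + L1 / 2 * ‖y - x‖ ^ 2 := by
  set v := y - x with hv
  have key : ∀ t : ℝ, HasDerivAt (fun t : ℝ => f (x + t • v))
      ⟪gradient f (x + t • v), v⟫ t := by
    intro t
    have h1 : HasDerivAt (fun t : ℝ => x + t • v) v t := by
      simpa using ((hasDerivAt_id t).smul_const v).const_add x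
    have h2 := ((hdiff (x + t • v)).hasGradientAt).hasFDerivAt
    exact (h2.comp_hasDerivAt t h1)
  set ψ : ℝ → ℝ := fun t => f (x + t • v) - t * ⟪gradient f x, v⟫ - L1 / 2 * t ^ 2 * ‖v‖ ^ 2 with hψ
  have hψderiv : ∀ t : ℝ, HasDerivAt ψ
      (⟪gradient f (x + t • v), v⟫ - ⟪gradient f x, v⟫ - L1 * t * ‖v‖ ^ 2) t := by
    intro t
    have h3 : HasDerivAt (fun t : ℝ => t * ⟪gradient f x, v⟫) ⟪gradient f x, v⟫ t := by
      simpa using (hasDerivAt_id t).mul_const _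
    have h4 : HasDerivAt (fun t : ℝ => L1 / 2 * t ^ 2 * ‖v‖ ^ 2) (L1 * t * ‖v‖ ^ 2) t := by
      have := ((hasDerivAt_pow 2 t).const_mul (L1 / 2)).mul_const (‖v‖ ^ 2)
      exact this.congr_deriv (by push_cast; ring)
    exact ((key t).sub h3).sub h4
  have hmono : AntitoneOn ψ (Set.Icc 0 1) := by
    apply antitoneOn_of_deriv_nonpos (convex_Icc 0 1)
    · exact Continuous.continuousOn (continuous_iff_continuousAt.2 fun t => (hψderiv t).continuousAt)
    · exact fun t _ => (hψderiv t).differentiableAt.differentiableWithinAt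
    · intro t ht
      rw [(hψderiv t).deriv]
      rw [interior_Icc] at ht
      have hinner : ⟪gradient f (x + t • v), v⟫ - ⟪gradient f x, v⟫ ≤ L1 * t * ‖v‖ ^ 2 := by
        rw [← inner_sub_left]
        calc ⟪gradient f (x + t • v) - gradient f x, v⟫
            ≤ ‖gradient f (x + t • v) - gradient f x‖ * ‖v‖ := real_inner_le_norm _ _
          _ ≤ L1 * ‖(x + t • v) - x‖ * ‖v‖ := by
              have := hglip (x + t • v) x
              exact mul_le_mul_of_nonneg_right this (norm_nonneg _)
          _ = L1 * t * ‖v‖ ^ 2 := by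
              simp [norm_smul, abs_of_pos ht.1]; ring
      linarith
  have h01 : ψ 1 ≤ ψ 0 := hmono (by norm_num) (by norm_num) zero_le_one
  simp only [hψ, one_smul, zero_smul, add_zero, one_pow, one_mul, zero_pow, mul_zero, zero_mul,
    sub_zero] at h01
  have : x + v = y := by rw [hv]; abel
  rw [this] at h01
  linarith

/-- objective decrease of an inexact gradient step with gradient error
`ε₄ ≤ ε₁/(2√2)`. -/
theorem inexact_gradient_step_decrease {d : ℕ}
    (f : EuclideanSpace ℝ (Fin d) → ℝ) (L1 ε₁ ε₄ : ℝ)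
    (hL1 : 0 < L1) (hε₁ : 0 < ε₁)
    (hdiff : Differentiable ℝ f)
    (hglip : ∀ a b : EuclideanSpace ℝ (Fin d),
      ‖gradient f a - gradient f b‖ ≤ L1 * ‖a - b‖)
    (x g : EuclideanSpace ℝ (Fin d))
    (hε₄0 : 0 ≤ ε₄) (hε₄ : ε₄ ≤ ε₁ / (2 * Real.sqrt 2))
    (hg : ‖g - gradient f x‖ ≤ ε₄)
    (xp : EuclideanSpace ℝ (Fin d)) (hxp : xp = x - (1 / L1) • g) :
    f x - f xp ≥ ‖g‖ ^ 2 / (4 * L1) - ε₁ ^ 2 / (8 * L1) := by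
  have hdesc := descent_lemma f L1 hL1 hdiff hglip x xp
  have hxpsub : xp - x = -((1 / L1) • g) := by rw [hxp]; abel
  have hnorm : ‖xp - x‖ ^ 2 = (1 / L1) ^ 2 * ‖g‖ ^ 2 := by
    rw [hxpsub, norm_neg, norm_smul]
    simp [abs_of_pos (by positivity : (0:ℝ) < 1 / L1), mul_pow]
  have hinner : ⟪gradient f x, xp - x⟫ = -(1 / L1) * ⟪gradient f x, g⟫ := by
    rw [hxpsub, inner_neg_right, real_inner_smul_right]; ring
  -- bound on inner product
  have hib : ⟪gradient f x, g⟫ ≥ ‖g‖ ^ 2 - ε₄ * ‖g‖ := by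
    have : ⟪gradient f x, g⟫ = ‖g‖ ^ 2 - ⟪g - gradient f x, g⟫ := by
      rw [inner_sub_left, real_inner_self_eq_norm_sq]; ring
    rw [this]
    have h1 : ⟪g - gradient f x, g⟫ ≤ ε₄ * ‖g‖ :=
      (real_inner_le_norm _ _).trans (mul_le_mul_of_nonneg_right hg (norm_nonneg _))
    linarith
  have hεsq : ε₄ ^ 2 ≤ ε₁ ^ 2 / 8 := by
    have h2 : ε₄ ^ 2 ≤ (ε₁ / (2 * Real.sqrt 2)) ^ 2 := by
      apply pow_le_pow_left₀ hε₄0 hε₄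
    have hs : Real.sqrt 2 ^ 2 = 2 := Real.sq_sqrt (by norm_num)
    have : (ε₁ / (2 * Real.sqrt 2)) ^ 2 = ε₁ ^ 2 / 8 := by
      rw [div_pow, mul_pow, hs]; norm_num
    linarith
  -- Young: ε₄‖g‖ ≤ ‖g‖²/4 + ε₄²
  have hyoung : ε₄ * ‖g‖ ≤ ‖g‖ ^ 2 / 4 + ε₄ ^ 2 := by
    nlinarith [sq_nonneg (‖g‖ / 2 - ε₄)]
  have hL1' : (0:ℝ) < 1 / L1 := by positivity
  rw [hinner, hnorm] at hdesc
  have hstep : f x - f xp ≥ (1/L1) * ⟪gradient f x, g⟫ - L1/2 * (1/L1)^2 * ‖g‖^2 := by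
    nlinarith
  have hchain : (1/L1) * ⟪gradient f x, g⟫ - L1/2 * (1/L1)^2 * ‖g‖^2
      ≥ (1/L1) * (‖g‖^2/4 - ε₁^2/8) := by
    have e1 : L1/2 * (1/L1)^2 = (1/L1) / 2 := by field_simp
    have : (1/L1) * ⟪gradient f x, g⟫ ≥ (1/L1) * (‖g‖^2 - ε₄ * ‖g‖) := by
      apply mul_le_mul_of_nonneg_left hib hL1'.le
    nlinarith
  have hfin : f x - f xp ≥ (1/L1) * (‖g‖^2/4 - ε₁^2/8) := le_trans hchain hstep
  have heq : (1/L1) * (‖g‖^2/4 - ε₁^2/8) = ‖g‖ ^ 2 / (4 * L1) - ε₁ ^ 2 / (8 * L1) := by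
    field_simp
  linarith [heq ▸ hfin]
end
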